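/- Let E be a real Banach space, (T_t)_{t∈(0,∞)} a semigroup of bounded operators that is locally bounded at 0, and fix t_0 > 0. If the discrete semigroup (T_{n t_0})_{n∈ℕ} converges strongly to a rank-1 operator P, then (T_t)_{t∈(0,∞)} converges strongly to P as t → ∞. -/

import Mathlib

open Filter Topology

/-- If a semigroup `(T_t)_{t ∈ (0,∞)}` on a real Banach space is locally bounded at `0`
and for some `t₀ > 0` the discrete semigroup `(T_{n t₀})_{n ∈ ℕ}` converges strongly to a
rank-one operator `P`, then the whole semigroup converges strongly to `P` as `t → ∞`. -/
theorem strong_convergence_of_discrete_rank_one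
    {E : Type*} [NormedAddCommGroup E] [NormedSpace ℝ E] [CompleteSpace E]
    (T : ℝ → E →L[ℝ] E)
    (hsg : ∀ s t : ℝ, 0 < s → 0 < t → T (s + t) = (T s).comp (T t))
    (hloc : ∃ c > 0, ∃ M : ℝ, ∀ t : ℝ, 0 < t → t ≤ c → ‖T t‖ ≤ M)
    (t₀ : ℝ) (ht₀ : 0 < t₀)
    (P : E →L[ℝ] E)
    (hrank : ∃ (φ : E →L[ℝ] ℝ) (f₀ : E), φ ≠ 0 ∧ f₀ ≠ 0 ∧ ∀ g : E, P g = φ g • f₀)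
    (hconv : ∀ x : E, Tendsto (fun n : ℕ => T (n * t₀) x) atTop (𝓝 (P x))) :
    ∀ x : E, Tendsto (fun t : ℝ => T t x) atTop (𝓝 (P x)) := by
  obtain ⟨φ, f₀, hφ, hf₀, hP⟩ := hrank
  obtain ⟨c, hc, M, hM⟩ := hloc
  set M' : ℝ := max M 1 with hM'def
  have hM'1 : (1:ℝ) ≤ M' := le_max_right _ _
  have hM'b : ∀ t : ℝ, 0 < t → t ≤ c → ‖T t‖ ≤ M' := fun t h1 h2 =>
    (hM t h1 h2).trans (le_max_left _ _)
  -- boundedness on (0, n*c]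
  have hbn : ∀ n : ℕ, ∀ t : ℝ, 0 < t → t ≤ n * c → ‖T t‖ ≤ M' ^ n := by
    intro n
    induction n with
    | zero => intro t h1 h2; norm_num at h2; linarith
    | succ n ih =>
      intro t h1 h2
      by_cases hle : t ≤ c
      · exact (hM'b t h1 hle).trans (le_self_pow₀ hM'1 (Nat.succ_ne_zero n))
      · push_neg at hle
        have h3 : 0 < t - c := by linarith
        have h4 : t - c ≤ n * c := by push_cast at h2; linarith
        have heq : T t = (T c).comp (T (t - c)) := by
          have := hsg c (t - c) hc h3
          rwa [show c + (t - c) = t by ring] at this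
        calc ‖T t‖ ≤ ‖T c‖ * ‖T (t-c)‖ := by rw [heq]; exact (T c).opNorm_comp_le _
          _ ≤ M' * M' ^ n :=
            mul_le_mul (hM'b c hc le_rfl) (ih (t - c) h3 h4) (norm_nonneg _) (by linarith)
          _ = M' ^ (n+1) := by ring
  -- boundedness on every (0, K]
  have hb : ∀ K : ℝ, ∃ C : ℝ, 1 ≤ C ∧ ∀ t : ℝ, 0 < t → t ≤ K → ‖T t‖ ≤ C := by
    intro K
    obtain ⟨n, hn⟩ := exists_nat_ge (K / c)
    refine ⟨M' ^ n, one_le_pow₀ hM'1, fun t h1 h2 => hbn n t h1 ?_⟩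
    calc t ≤ K := h2
      _ = (K / c) * c := by field_simp
      _ ≤ n * c := mul_le_mul_of_nonneg_right hn hc.le
  -- shifted limits
  have hshift : ∀ (x : E) (m : ℕ),
      Tendsto (fun n : ℕ => T (((n + m : ℕ) : ℝ) * t₀) x) atTop (𝓝 (P x)) := by
    intro x m
    exact (hconv x).comp (tendsto_add_atTop_nat m)
  -- T((m+1)t₀) P = P
  have hfix : ∀ (m : ℕ) (x : E), T (((m:ℝ)+1) * t₀) (P x) = P x := by
    intro m x
    have h1 : Tendsto (fun n : ℕ => T (((m:ℝ)+1) * t₀) (T (((n+1 : ℕ) : ℝ) * t₀) x)) atTop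
        (𝓝 (T (((m:ℝ)+1) * t₀) (P x))) :=
      ((T (((m:ℝ)+1) * t₀)).continuous.tendsto _).comp (hshift x 1)
    have h2 : Tendsto (fun n : ℕ => T (((m:ℝ)+1) * t₀) (T (((n+1 : ℕ) : ℝ) * t₀) x)) atTop
        (𝓝 (P x)) := by
      refine (hshift x (m + 2)).congr fun n => ?_
      have hpos1 : (0:ℝ) < ((m:ℝ)+1) * t₀ := by positivity
      have hpos2 : (0:ℝ) < (((n+1:ℕ):ℝ)) * t₀ := by positivity
      have hcomp := hsg (((m:ℝ)+1) * t₀) (((n+1:ℕ):ℝ) * t₀) hpos1 hpos2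
      have harg : ((n + (m+2) : ℕ) : ℝ) * t₀ = ((m:ℝ)+1) * t₀ + ((n+1:ℕ):ℝ) * t₀ := by
        push_cast; ring
      rw [harg, hcomp]; rfl
    exact tendsto_nhds_unique h1 h2
  -- points fixed by all T((m+1)t₀) are fixed by P
  have hfixpoint : ∀ y : E, (∀ m : ℕ, T (((m:ℝ)+1) * t₀) y = y) → P y = y := by
    intro y hy
    have h1 : Tendsto (fun m : ℕ => T (((m:ℝ)+1) * t₀) y) atTop (𝓝 (P y)) := by
      refine (hshift y 1).congr fun m => ?_
      norm_cast
    have h2 : Tendsto (fun m : ℕ => T (((m:ℝ)+1) * t₀) y) atTop (𝓝 y) := by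
      simp only [hy]; exact tendsto_const_nhds
    exact tendsto_nhds_unique h1 h2
  have hPP : ∀ x : E, P (P x) = P x := fun x => hfixpoint (P x) (fun m => hfix m x)
  obtain ⟨x₁, hx₁⟩ : ∃ x, φ x ≠ 0 := by
    by_contra h
    push_neg at h
    exact hφ (by ext x; simpa using h x)
  have hφf₀ : φ f₀ = 1 := by
    have h := hPP x₁
    rw [hP x₁, map_smul, hP f₀] at h
    have h2 : (φ x₁ * φ f₀) • f₀ = (φ x₁ * 1) • f₀ := by rw [mul_smul, mul_one]; exact h
    have h3 := smul_left_injective ℝ hf₀ h2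
    exact mul_left_cancel₀ hx₁ h3
  have hPf₀ : P f₀ = f₀ := by rw [hP f₀, hφf₀, one_smul]
  have hTf₀fix : ∀ m : ℕ, T (((m:ℝ)+1) * t₀) f₀ = f₀ := by
    intro m
    have := hfix m f₀
    rwa [hPf₀] at this
  -- T s f₀ is a multiple of f₀
  have hrange : ∀ s : ℝ, 0 < s → T s f₀ = φ (T s f₀) • f₀ := by
    intro s hs
    have hy : ∀ m : ℕ, T (((m:ℝ)+1) * t₀) (T s f₀) = T s f₀ := by
      intro m
      have hpos : (0:ℝ) < ((m:ℝ)+1) * t₀ := by positivity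
      have h1 := hsg (((m:ℝ)+1) * t₀) s hpos hs
      have h2 := hsg s (((m:ℝ)+1) * t₀) hs hpos
      have hcomm : (T (((m:ℝ)+1) * t₀)).comp (T s) = (T s).comp (T (((m:ℝ)+1) * t₀)) := by
        rw [← h1, ← h2, add_comm]
      calc T (((m:ℝ)+1) * t₀) (T s f₀)
          = T s (T (((m:ℝ)+1) * t₀) f₀) :=
            congrArg (fun A : E →L[ℝ] E => A f₀) hcomm
        _ = T s f₀ := by rw [hTf₀fix m]
    have := hfixpoint (T s f₀) hy
    rw [hP] at this
    exact this.symm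
  set Λ : ℝ → ℝ := fun s => φ (T s f₀) with hΛdef
  have hΛs : ∀ s, 0 < s → T s f₀ = Λ s • f₀ := hrange
  have hΛmul : ∀ s t : ℝ, 0 < s → 0 < t → Λ (s + t) = Λ s * Λ t := by
    intro s t hs ht
    have h1 : T (s+t) f₀ = T s (T t f₀) := by rw [hsg s t hs ht]; rfl
    have h3 : T (s+t) f₀ = (Λ t * Λ s) • f₀ := by
      rw [h1, hΛs t ht, map_smul, hΛs s hs, smul_smul]
    have h2 := congrArg φ h3
    simp only [map_smul, smul_eq_mul, hφf₀, mul_one] at h2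
    rw [hΛdef]
    simp only [h2]
    ring
  have hΛt₀ : ∀ m : ℕ, Λ (((m:ℝ)+1) * t₀) = 1 := by
    intro m
    simp only [hΛdef, hTf₀fix m, hφf₀]
  have hΛnonneg : ∀ s : ℝ, 0 < s → 0 ≤ Λ s := by
    intro s hs
    have h := hΛmul (s/2) (s/2) (by linarith) (by linarith)
    rw [show s/2 + s/2 = s by ring] at h
    rw [h]
    exact mul_self_nonneg _
  have hΛpos : ∀ s : ℝ, 0 < s → 0 < Λ s := by
    intro s hs
    rcases (hΛnonneg s hs).lt_or_eq with h | h
    · exact h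
    · exfalso
      obtain ⟨m, hm⟩ := exists_nat_gt (s / t₀)
      have hlt : s < ((m:ℝ)+1) * t₀ := by
        have h1 : s / t₀ < (m:ℝ) + 1 := by linarith
        calc s = s / t₀ * t₀ := by field_simp
          _ < ((m:ℝ)+1) * t₀ := mul_lt_mul_of_pos_right h1 ht₀
      have h2 := hΛmul s (((m:ℝ)+1)*t₀ - s) hs (by linarith)
      rw [show s + (((m:ℝ)+1)*t₀ - s) = ((m:ℝ)+1)*t₀ by ring, hΛt₀ m, ← h] at h2
      simp at h2
  have hΛpow : ∀ s : ℝ, 0 < s → ∀ n : ℕ, Λ (((n:ℝ)+1) * s) = Λ s ^ (n+1) := by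
    intro s hs n
    induction n with
    | zero => norm_num
    | succ n ih =>
      have h1 : (((n:ℝ)+1)+1) * s = s + ((n:ℝ)+1) * s := by ring
      have h2 : (0:ℝ) < ((n:ℝ)+1) * s := by positivity
      rw [show (((n+1:ℕ):ℝ)+1) * s = s + ((n:ℝ)+1) * s by push_cast; ring,
        hΛmul s (((n:ℝ)+1) * s) hs h2, ih]
      ring
  have hΛdiv : ∀ b : ℕ, Λ (t₀ / ((b:ℝ)+1)) = 1 := by
    intro b
    have hpos : (0:ℝ) < t₀ / ((b:ℝ)+1) := by positivity
    have h1 : Λ (t₀ / ((b:ℝ)+1)) ^ (b+1) = 1 := by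
      rw [← hΛpow _ hpos b, show ((b:ℝ)+1) * (t₀ / ((b:ℝ)+1)) = t₀ by field_simp]
      have := hΛt₀ 0
      norm_num at this
      exact this
    have hx := hΛpos _ hpos
    rcases lt_trichotomy (Λ (t₀ / ((b:ℝ)+1))) 1 with h | h | h
    · exfalso
      have := pow_lt_one₀ (le_of_lt hx) h (Nat.succ_ne_zero b)
      rw [h1] at this; exact lt_irrefl 1 this
    · exact h
    · exfalso
      have := one_lt_pow₀ h (Nat.succ_ne_zero b)
      rw [h1] at this; exact lt_irrefl 1 this
  have hΛrat : ∀ a b : ℕ, 1 ≤ a → 1 ≤ b → Λ (((a:ℝ) * t₀) / (b:ℝ)) = 1 := by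
    intro a b ha hb
    obtain ⟨a', rfl⟩ : ∃ a', a = a' + 1 := ⟨a - 1, by omega⟩
    obtain ⟨b', rfl⟩ : ∃ b', b = b' + 1 := ⟨b - 1, by omega⟩
    have hpos : (0:ℝ) < t₀ / ((b':ℝ)+1) := by positivity
    have harg : (((a'+1:ℕ):ℝ) * t₀) / ((b'+1:ℕ):ℝ) = ((a':ℝ)+1) * (t₀ / ((b':ℝ)+1)) := by
      push_cast; ring
    rw [harg, hΛpow _ hpos a', hΛdiv b', one_pow]
  -- dense sets of points where Λ = 1
  have hqform : ∀ q : ℚ, 0 < q → Λ ((q:ℝ) * t₀) = 1 := by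
    intro q hq
    have hnum : (1:ℤ) ≤ q.num := Rat.num_pos.mpr hq
    have hden : 1 ≤ q.den := q.pos
    have h1 : ((q:ℝ) * t₀) = ((q.num.toNat : ℝ) * t₀) / (q.den : ℝ) := by
      rw [Rat.cast_def]
      have : ((q.num.toNat : ℝ)) = (q.num : ℝ) := by
        rw [← Int.cast_natCast, Int.toNat_of_nonneg (by omega)]
      rw [this]; ring
    rw [h1]
    exact hΛrat q.num.toNat q.den (by omega) hden
  have hdense_lt : ∀ r ε : ℝ, 0 < r → 0 < ε → ∃ u : ℝ, Λ u = 1 ∧ 0 < u ∧ r - ε < u ∧ u < r := by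
    intro r ε hr hε
    set lo := max (r - ε) (r/2) with hlo
    have hlo_lt : lo < r := max_lt (by linarith) (by linarith)
    have hlo_pos : 0 < lo := lt_of_lt_of_le (by linarith) (le_max_right _ _)
    obtain ⟨q, hq1, hq2⟩ := exists_rat_btwn (div_lt_div_of_pos_right hlo_lt ht₀ |>.trans_le le_rfl)
    have hqpos : (0:ℚ) < q := by
      have : (0:ℝ) < (q:ℝ) := lt_trans (by positivity) hq1
      exact_mod_cast this
    refine ⟨(q:ℝ) * t₀, hqform q hqpos, by positivity, ?_, ?_⟩
    · have : lo < (q:ℝ) * t₀ := by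
        rw [div_lt_iff₀ ht₀] at hq1; linarith
      have h2 : r - ε ≤ lo := le_max_left _ _
      linarith
    · rw [lt_div_iff₀ ht₀] at hq2; linarith
  have hdense_gt : ∀ r ε : ℝ, 0 < r → 0 < ε → ∃ u : ℝ, Λ u = 1 ∧ r < u ∧ u < r + ε := by
    intro r ε hr hε
    obtain ⟨q, hq1, hq2⟩ := exists_rat_btwn (div_lt_div_of_pos_right (by linarith : r < r + ε) ht₀)
    have hqpos : (0:ℚ) < q := by
      have : (0:ℝ) < (q:ℝ) := lt_trans (by positivity) hq1
      exact_mod_cast this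
    refine ⟨(q:ℝ) * t₀, hqform q hqpos, ?_, ?_⟩
    · rw [div_lt_iff₀ ht₀] at hq1; linarith
    · rw [lt_div_iff₀ ht₀] at hq2; linarith
  -- a uniform bound for Λ on (0, c]
  obtain ⟨CΛ, hCΛ⟩ : ∃ CΛ : ℝ, ∀ s : ℝ, 0 < s → s ≤ c → Λ s ≤ CΛ := by
    refine ⟨‖φ‖ * (M' * ‖f₀‖), fun s h1 h2 => ?_⟩
    calc Λ s ≤ ‖φ (T s f₀)‖ := le_abs_self _
      _ ≤ ‖φ‖ * ‖T s f₀‖ := φ.le_opNorm _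
      _ ≤ ‖φ‖ * (‖T s‖ * ‖f₀‖) :=
          mul_le_mul_of_nonneg_left ((T s).le_opNorm f₀) (norm_nonneg _)
      _ ≤ ‖φ‖ * (M' * ‖f₀‖) := by
          have := hM'b s h1 h2
          have h3 : ‖T s‖ * ‖f₀‖ ≤ M' * ‖f₀‖ :=
            mul_le_mul_of_nonneg_right this (norm_nonneg _)
          exact mul_le_mul_of_nonneg_left h3 (norm_nonneg _)
  -- Λ ≡ 1
  have hΛone : ∀ r : ℝ, 0 < r → Λ r = 1 := by
    intro r hr
    have hle : Λ r ≤ 1 := by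
      by_contra hcon
      push_neg at hcon
      obtain ⟨n, hn⟩ := pow_unbounded_of_one_lt CΛ hcon
      have hn' : CΛ < Λ r ^ (n+1) :=
        lt_of_lt_of_le hn (pow_le_pow_right₀ (le_of_lt hcon) (Nat.le_succ n))
      have hmpos : (0:ℝ) < ((n:ℝ)+1) := by positivity
      obtain ⟨u, hu1, hupos, hu2, hu3⟩ := hdense_lt r (c / ((n:ℝ)+1)) hr (by positivity)
      set δ := r - u with hδ
      have hδpos : 0 < δ := by simp [hδ]; linarith
      have hδle : δ ≤ c / ((n:ℝ)+1) := by simp [hδ]; linarith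
      have h1 : Λ r = Λ δ := by
        have h := hΛmul u δ hupos hδpos
        rw [show u + δ = r by rw [hδ]; ring, hu1, one_mul] at h
        exact h
      have h2 : Λ δ ^ (n+1) = Λ (((n:ℝ)+1) * δ) := (hΛpow δ hδpos n).symm
      have h3 : Λ (((n:ℝ)+1) * δ) ≤ CΛ := by
        refine hCΛ _ (by positivity) ?_
        calc ((n:ℝ)+1) * δ ≤ ((n:ℝ)+1) * (c / ((n:ℝ)+1)) :=
              mul_le_mul_of_nonneg_left hδle (by positivity)
          _ = c := by field_simp
      rw [h1, h2] at hn'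
      linarith
    have hge : 1 ≤ Λ r := by
      by_contra hcon
      push_neg at hcon
      have hrpos := hΛpos r hr
      have hinv : 1 < (Λ r)⁻¹ := (one_lt_inv₀ hrpos).mpr hcon
      obtain ⟨n, hn⟩ := pow_unbounded_of_one_lt CΛ hinv
      have hn' : CΛ < ((Λ r)⁻¹) ^ (n+1) :=
        lt_of_lt_of_le hn (pow_le_pow_right₀ (le_of_lt hinv) (Nat.le_succ n))
      obtain ⟨u, hu1, hu2, hu3⟩ := hdense_gt r (c / ((n:ℝ)+1)) hr (by positivity)
      set δ := u - r with hδ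
      have hδpos : 0 < δ := by simp [hδ]; linarith
      have hδle : δ ≤ c / ((n:ℝ)+1) := by simp [hδ]; linarith
      have h1 : Λ δ = (Λ r)⁻¹ := by
        have h := hΛmul r δ hr hδpos
        rw [show r + δ = u by simp [hδ], hu1] at h
        exact eq_inv_of_mul_eq_one_left (by rw [mul_comm]; exact h.symm)
      have h2 : Λ δ ^ (n+1) = Λ (((n:ℝ)+1) * δ) := (hΛpow δ hδpos n).symm
      have h3 : Λ (((n:ℝ)+1) * δ) ≤ CΛ := by
        refine hCΛ _ (by positivity) ?_
        calc ((n:ℝ)+1) * δ ≤ ((n:ℝ)+1) * (c / ((n:ℝ)+1)) :=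
              mul_le_mul_of_nonneg_left hδle (by positivity)
          _ = c := by field_simp
      rw [← h1] at hn'
      rw [h2] at hn'
      linarith
    linarith
  -- T s P = P for all s > 0
  have hTP : ∀ s : ℝ, 0 < s → ∀ x : E, T s (P x) = P x := by
    intro s hs x
    rw [hP x, map_smul, hΛs s hs, hΛone s hs, one_smul]
  -- conclusion
  intro x
  obtain ⟨C₂, hC₂1, hC₂⟩ := hb (2 * t₀)
  have hx := hconv x
  rw [Metric.tendsto_atTop] at hx ⊢
  intro ε hε
  obtain ⟨N, hN⟩ := hx (ε / (C₂ + 1)) (by positivity)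
  refine ⟨((N:ℝ)+2) * t₀, fun t ht => ?_⟩
  have htpos : 0 < t := lt_of_lt_of_le (by positivity) ht
  set k := ⌊t / t₀⌋₊ with hk
  have hkge : N + 2 ≤ k := by
    apply Nat.le_floor
    rw [le_div_iff₀ ht₀]
    push_cast
    linarith
  set n := k - 1 with hn
  have hnge : N + 1 ≤ n := by omega
  have hncast : (n:ℝ) = (k:ℝ) - 1 := by
    rw [hn, Nat.cast_sub (by omega)]; norm_num
  have hkle : (k:ℝ) * t₀ ≤ t := by
    have h := Nat.floor_le (show (0:ℝ) ≤ t / t₀ by positivity)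
    rw [← hk] at h
    calc (k:ℝ) * t₀ ≤ (t / t₀) * t₀ := mul_le_mul_of_nonneg_right h ht₀.le
      _ = t := by field_simp
  have hklt : t < ((k:ℝ)+1) * t₀ := by
    have h := Nat.lt_floor_add_one (t / t₀)
    rw [← hk] at h
    calc t = (t / t₀) * t₀ := by field_simp
      _ < ((k:ℝ)+1) * t₀ := mul_lt_mul_of_pos_right h ht₀
  set r := t - (n:ℝ) * t₀ with hrdef
  have haux : ((k:ℝ) - 1) * t₀ = (k:ℝ) * t₀ - t₀ := by ring
  have hr1 : t₀ ≤ r := by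
    rw [hrdef, hncast, haux]; linarith
  have hr2 : r ≤ 2 * t₀ := by
    rw [hrdef, hncast, haux]
    have : ((k:ℝ)+1) * t₀ = (k:ℝ) * t₀ + t₀ := by ring
    linarith
  have hrpos : 0 < r := lt_of_lt_of_le ht₀ hr1
  have hnpos : 0 < (n:ℝ) * t₀ := by
    have h1 : (1:ℝ) ≤ (n:ℝ) := by exact_mod_cast (by omega : 1 ≤ n)
    nlinarith
  have hsplit : T t x = T r (T ((n:ℝ) * t₀) x) := by
    have h := hsg r ((n:ℝ) * t₀) hrpos hnpos
    rw [show t = r + (n:ℝ) * t₀ by rw [hrdef]; ring, h]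
    rfl
  have hPfix : T r (P x) = P x := hTP r hrpos x
  have hdist := hN n (by omega)
  rw [dist_eq_norm] at hdist
  have hkey : dist (T t x) (P x) ≤ C₂ * ‖T ((n:ℝ) * t₀) x - P x‖ := by
    calc dist (T t x) (P x) = ‖T r (T ((n:ℝ) * t₀) x) - T r (P x)‖ := by
          rw [dist_eq_norm, hsplit, hPfix]
      _ = ‖T r (T ((n:ℝ) * t₀) x - P x)‖ := by rw [map_sub]
      _ ≤ ‖T r‖ * ‖T ((n:ℝ) * t₀) x - P x‖ := (T r).le_opNorm _
      _ ≤ C₂ * ‖T ((n:ℝ) * t₀) x - P x‖ :=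
          mul_le_mul_of_nonneg_right (hC₂ r hrpos hr2) (norm_nonneg _)
  have hfinal : C₂ * ‖T ((n:ℝ) * t₀) x - P x‖ < ε := by
    have h1 : C₂ * ‖T ((n:ℝ) * t₀) x - P x‖ < C₂ * (ε / (C₂ + 1)) :=
      mul_lt_mul_of_pos_left hdist (by linarith)
    have h2 : C₂ * (ε / (C₂ + 1)) < ε := by
      rw [mul_div_assoc', div_lt_iff₀ (by linarith)]
      nlinarith
    linarith
  linarith
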